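/- If n is an odd composite number, then the set of integers a with 1 ≤ a ≤ n-1 for which the Solovay-Strassen predicate W(a, n) fails (i.e., gcd(a,n)=1 and a^((n-1)/2) ≡ (a/n) mod n) forms a proper subgroup of (ℤ/nℤ)^× when restricted to units, and hence at least half of the integers in [1, n-1] satisfy W(a, n). -/

import Mathlib

/-- The Solovay-Strassen witness predicate. -/
def SSWitness (a n : ℕ) : Prop :=
  1 < Nat.gcd a n ∨ ¬ ((a : ℤ) ^ ((n - 1) / 2) ≡ jacobiSym (a : ℤ) n [ZMOD (n : ℤ)])

/-- In a commutative ring, if `x * x = 0` then `(1 + x)^k = 1 + k * x`. -/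
lemma ss_one_add_pow {R : Type*} [CommRing R] (x : R) (hx : x * x = 0) (k : ℕ) :
    (1 + x) ^ k = 1 + (k : R) * x := by
  induction k with
  | zero => simp
  | succ k ih =>
    rw [pow_succ, ih]
    push_cast
    linear_combination (k : R) * hx

/-- Multiplicativity of the Jacobi symbol on values of units. -/
lemma ss_jacobi_val_mul (n : ℕ) [NeZero n] (u v : (ZMod n)ˣ) :
    jacobiSym ((((u * v : (ZMod n)ˣ) : ZMod n).val : ℤ)) n =
      jacobiSym (((u : ZMod n).val : ℤ)) n * jacobiSym (((v : ZMod n).val : ℤ)) n := by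
  have h : ((u * v : (ZMod n)ˣ) : ZMod n).val = (u : ZMod n).val * (v : ZMod n).val % n := by
    rw [Units.val_mul, ZMod.val_mul]
  rw [h, ← jacobiSym.mul_left]
  rw [jacobiSym.mod_left (((u : ZMod n).val : ℤ) * ((v : ZMod n).val : ℤ)) n]
  norm_cast

lemma ss_jacobi_val_pm (n : ℕ) [NeZero n] (u : (ZMod n)ˣ) :
    jacobiSym (((u : ZMod n).val : ℤ)) n = 1 ∨ jacobiSym (((u : ZMod n).val : ℤ)) n = -1 := by
  apply jacobiSym.eq_one_or_neg_one
  rw [Int.gcd_natCast_natCast]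
  exact ZMod.val_coe_unit_coprime u

/-- There exists a unit violating the Euler–Jacobi congruence for odd composite `n`. -/
lemma ss_exists_bad (n : ℕ) (hodd : Odd n) (h1 : 1 < n) (hcomp : ¬ n.Prime) :
    ∃ u : (ZMod n)ˣ, (u : ZMod n) ^ ((n - 1) / 2) ≠
      ((jacobiSym (((u : ZMod n).val : ℤ)) n : ℤ) : ZMod n) := by
  haveI : NeZero n := ⟨by omega⟩
  have h2e : n - 1 = 2 * ((n - 1) / 2) :=
    (Nat.mul_div_cancel' (Nat.Odd.sub_odd hodd odd_one).two_dvd).symm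
  by_cases hsf : Squarefree n
  · -- squarefree case
    set p := n.minFac with hp
    have pp : p.Prime := Nat.minFac_prime (by omega)
    haveI : Fact p.Prime := ⟨pp⟩
    have hpn : p ∣ n := Nat.minFac_dvd n
    set m := n / p with hm
    have hnm : p * m = n := Nat.mul_div_cancel' hpn
    have hm0 : 0 < m := Nat.div_pos (Nat.minFac_le (by omega)) pp.pos
    have hm1 : m ≠ 1 := by
      intro h
      exact hcomp (by rw [← hnm, h, mul_one]; exact pp)
    have hmodd : Odd m := by
      rcases Nat.even_or_odd m with he | ho
      · exact absurd hodd (by rw [← hnm]; simp [Nat.even_mul, he, parity_simps])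
      · exact ho
    have hpodd : Odd p := by
      rcases Nat.even_or_odd p with he | ho
      · exact absurd hodd (by rw [← hnm]; simp [Nat.even_mul, he, parity_simps])
      · exact ho
    have hm3 : 3 ≤ m := by
      rcases hmodd with ⟨t, ht⟩; omega
    haveI : NeZero m := ⟨by omega⟩
    have hp2 : p ≠ 2 := by
      rcases hpodd with ⟨t, ht⟩; omega
    have hcop : Nat.Coprime p m := by
      refine pp.coprime_iff_not_dvd.mpr ?_
      intro hdvd
      exact (Nat.squarefree_iff_prime_squarefree.mp hsf p pp)
        (hnm ▸ mul_dvd_mul_left p hdvd)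
    -- nonsquare mod p
    obtain ⟨b, hb⟩ := FiniteField.exists_nonsquare (F := ZMod p)
      (by rw [ZMod.ringChar_zmod_n]; exact hp2)
    have hb0 : b ≠ 0 := fun h => hb (h ▸ ⟨0, by simp⟩)
    obtain ⟨k, hk1, hk2⟩ := Nat.chineseRemainder hcop b.val 1
    have hkp : (k : ZMod p) = b := by
      rw [(ZMod.natCast_eq_natCast_iff _ _ _).mpr hk1, ZMod.natCast_val, ZMod.cast_id]
    have hkm : (k : ZMod m) = 1 := by
      rw [(ZMod.natCast_eq_natCast_iff _ _ _).mpr hk2, Nat.cast_one]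
    have hkcop : Nat.Coprime k n := by
      rw [← hnm]
      refine Nat.Coprime.mul_right ?_ ?_
      · exact (pp.coprime_iff_not_dvd.mpr (fun h => hb0 (by
          rw [← hkp, (ZMod.natCast_eq_zero_iff k p).mpr h]))).symm
      · have := Nat.ModEq.gcd_eq hk2
        simpa [Nat.Coprime] using this
    refine ⟨ZMod.unitOfCoprime k hkcop, ?_⟩
    have huval : ((ZMod.unitOfCoprime k hkcop : ZMod n)).val = k % n := by
      rw [ZMod.coe_unitOfCoprime, ZMod.val_natCast]
    -- compute the Jacobi symbol
    have hJ : jacobiSym (((ZMod.unitOfCoprime k hkcop : ZMod n)).val : ℤ) n = -1 := by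
      rw [huval]
      have hmod : ((k % n : ℕ) : ℤ) = (k : ℤ) % (n : ℤ) := by push_cast; rfl
      rw [hmod, ← jacobiSym.mod_left]
      rw [← hnm, jacobiSym.mul_right]
      have hJp : jacobiSym (k : ℤ) p = -1 := by
        rw [← jacobiSym.legendreSym.to_jacobiSym]
        rw [legendreSym.eq_neg_one_iff]
        rw [show (((k : ℤ) : ZMod p)) = b by rw [← hkp]; push_cast; rfl]
        exact hb
      have hJm : jacobiSym (k : ℤ) m = 1 := by
        rw [jacobiSym.mod_left]
        have hkm' : (k : ℤ) % (m : ℤ) = 1 := by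
          have h' : k % m = 1 % m := hk2
          have h1m : 1 % m = 1 := Nat.mod_eq_of_lt (by omega)
          have h'' : ((k % m : ℕ) : ℤ) = 1 := by rw [h', h1m]; norm_num
          rw [← h'']; push_cast; rfl
        rw [hkm', jacobiSym.one_left]
      rw [hJp, hJm]; ring
    rw [hJ]
    -- reduce mod m
    intro heq
    have hmn : m ∣ n := ⟨p, by rw [← hnm]; ring⟩
    have hmap := congrArg (ZMod.castHom hmn (ZMod m)) heq
    rw [map_pow] at hmap
    have hx : (ZMod.castHom hmn (ZMod m)) (ZMod.unitOfCoprime k hkcop : ZMod n) = 1 := by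
      rw [ZMod.coe_unitOfCoprime, map_natCast, hkm]
    rw [hx, one_pow] at hmap
    rw [show (((-1 : ℤ) : ZMod n)) = -1 by push_cast; ring, map_neg, map_one] at hmap
    have h2 : (2 : ZMod m) = 0 := by linear_combination hmap
    have hm2 : m ∣ 2 := by
      have := (ZMod.natCast_eq_zero_iff 2 m).mp (by exact_mod_cast h2)
      exact this
    have := Nat.le_of_dvd (by norm_num) hm2
    omega
  · -- non-squarefree case
    rw [Nat.squarefree_iff_prime_squarefree] at hsf
    push_neg at hsf
    obtain ⟨p, pp, hp2⟩ := hsf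
    have hpn : p ∣ n := dvd_trans (dvd_mul_left p p) hp2
    set m := n / p with hm
    have hnm : p * m = n := Nat.mul_div_cancel' hpn
    have hpm : p ∣ m := (Nat.dvd_div_iff_mul_dvd hpn).mpr hp2
    have hm0 : 0 < m := Nat.div_pos (Nat.le_of_dvd (by omega) hpn) pp.pos
    have hcop : Nat.Coprime (1 + m) n := by
      by_contra h
      obtain ⟨q, hq, hqd⟩ := Nat.exists_prime_and_dvd h
      have hq1 : q ∣ 1 + m := hqd.trans (Nat.gcd_dvd_left _ _)
      have hqn : q ∣ n := hqd.trans (Nat.gcd_dvd_right _ _)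
      have hqm : q ∣ m := by
        rcases hq.dvd_mul.mp (by rw [hnm]; exact hqn) with h' | h'
        · exact ((Nat.prime_dvd_prime_iff_eq hq pp).mp h') ▸ hpm
        · exact h'
      have hq1' : q ∣ 1 := by simpa using Nat.dvd_sub hq1 hqm
      exact hq.ne_one (Nat.dvd_one.mp hq1')
    refine ⟨ZMod.unitOfCoprime (1 + m) hcop, ?_⟩
    intro heq
    have hcc : ((jacobiSym (((ZMod.unitOfCoprime (1 + m) hcop : ZMod n)).val : ℤ) n : ℤ) : ZMod n)
        * ((jacobiSym (((ZMod.unitOfCoprime (1 + m) hcop : ZMod n)).val : ℤ) n : ℤ) : ZMod n)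
        = 1 := by
      rcases ss_jacobi_val_pm n (ZMod.unitOfCoprime (1 + m) hcop) with h' | h' <;>
        rw [h'] <;> push_cast <;> ring
    have hx2 : (m : ZMod n) * (m : ZMod n) = 0 := by
      rw [← Nat.cast_mul, ZMod.natCast_eq_zero_iff, ← hnm]
      exact mul_dvd_mul hpm dvd_rfl
    have h' : (ZMod.unitOfCoprime (1 + m) hcop : ZMod n) = 1 + (m : ZMod n) := by
      rw [ZMod.coe_unitOfCoprime]; push_cast; ring
    have hpow : ((1 : ZMod n) + (m : ZMod n)) ^ (n - 1) = 1 := by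
      calc ((1 : ZMod n) + (m : ZMod n)) ^ (n - 1)
          = ((ZMod.unitOfCoprime (1 + m) hcop : ZMod n) ^ ((n - 1) / 2)) ^ 2 := by
            rw [h', ← pow_mul, mul_comm, ← h2e]
        _ = 1 := by rw [heq, pow_two]; exact hcc
    rw [ss_one_add_pow _ hx2] at hpow
    have hz : ((n - 1 : ℕ) : ZMod n) * (m : ZMod n) = 0 := by linear_combination hpow
    have hdvd : n ∣ (n - 1) * m := by
      rw [← ZMod.natCast_eq_zero_iff]; push_cast; exact hz
    have hpd : p ∣ n - 1 :=
      (Nat.mul_dvd_mul_iff_right hm0).mp (by rw [hnm]; exact hdvd)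
    have : p ∣ 1 := by
      have := Nat.dvd_sub hpn hpd
      simpa [Nat.sub_sub_self (by omega : 1 ≤ n)] using this
    exact pp.ne_one (Nat.dvd_one.mp this)

theorem stmt9 (n : ℕ) (hodd : Odd n) (h1 : 1 < n) (hcomp : ¬ n.Prime) :
    (∃ H : Subgroup (ZMod n)ˣ, H ≠ ⊤ ∧
      ∀ u : (ZMod n)ˣ, u ∈ H ↔
        ((u : ZMod n) ^ ((n - 1) / 2) =
          ((jacobiSym (((u : ZMod n).val : ℤ)) n : ℤ) : ZMod n))) ∧
    n - 1 ≤ 2 * Set.ncard {a : ℕ | 1 ≤ a ∧ a ≤ n - 1 ∧ SSWitness a n} := by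
  haveI : NeZero n := ⟨by omega⟩
  set e := (n - 1) / 2 with he
  -- the subgroup
  have sq_one : ∀ u : (ZMod n)ˣ,
      ((jacobiSym (((u : ZMod n).val : ℤ)) n : ℤ) : ZMod n)
      * ((jacobiSym (((u : ZMod n).val : ℤ)) n : ℤ) : ZMod n) = 1 := by
    intro u
    rcases ss_jacobi_val_pm n u with h' | h' <;> rw [h'] <;> push_cast <;> ring
  let H : Subgroup (ZMod n)ˣ :=
  { carrier := {u | (u : ZMod n) ^ e =
      ((jacobiSym (((u : ZMod n).val : ℤ)) n : ℤ) : ZMod n)},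
    one_mem' := by
      have hv : ((1 : (ZMod n)ˣ) : ZMod n).val = 1 := by
        rw [Units.val_one, ZMod.val_one_eq_one_mod, Nat.mod_eq_of_lt h1]
      simp only [Set.mem_setOf_eq]
      rw [hv, Units.val_one, one_pow]
      norm_num [jacobiSym.one_left]
    mul_mem' := by
      intro u v hu hv
      simp only [Set.mem_setOf_eq] at *
      rw [ss_jacobi_val_mul n u v, Units.val_mul, mul_pow, hu, hv]
      push_cast
      ring
    inv_mem' := by
      intro u hu
      simp only [Set.mem_setOf_eq] at *
      have hmul := ss_jacobi_val_mul n u u⁻¹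
      have h1v : ((u * u⁻¹ : (ZMod n)ˣ) : ZMod n).val = 1 := by
        rw [mul_inv_cancel, Units.val_one, ZMod.val_one_eq_one_mod, Nat.mod_eq_of_lt h1]
      rw [h1v] at hmul
      simp only [Nat.cast_one, jacobiSym.one_left] at hmul
      -- jacobi(u) * jacobi(u⁻¹) = 1, and jacobi(u) = ±1 so jacobi(u⁻¹) = jacobi(u)
      have hpm := ss_jacobi_val_pm n u
      have hinv : jacobiSym ((((u⁻¹ : (ZMod n)ˣ) : ZMod n)).val : ℤ) n
          = jacobiSym (((u : ZMod n).val : ℤ)) n := by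
        rcases hpm with h' | h' <;> rw [h'] at hmul ⊢ <;> linarith
      rw [hinv]
      -- (u⁻¹)^e * u^e = 1
      have hprod : ((u⁻¹ : (ZMod n)ˣ) : ZMod n) ^ e * ((u : (ZMod n)ˣ) : ZMod n) ^ e = 1 := by
        rw [← mul_pow, ← Units.val_mul, inv_mul_cancel, Units.val_one, one_pow]
      rw [hu] at hprod
      calc ((u⁻¹ : (ZMod n)ˣ) : ZMod n) ^ e
          = ((u⁻¹ : (ZMod n)ˣ) : ZMod n) ^ e *
            (((jacobiSym (((u : ZMod n).val : ℤ)) n : ℤ) : ZMod n) *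
             ((jacobiSym (((u : ZMod n).val : ℤ)) n : ℤ) : ZMod n)) := by
              rw [sq_one u, mul_one]
        _ = ((jacobiSym (((u : ZMod n).val : ℤ)) n : ℤ) : ZMod n) := by
              rw [← mul_assoc, hprod, one_mul] }
  obtain ⟨u0, hu0⟩ := ss_exists_bad n hodd h1 hcomp
  have hHne : H ≠ ⊤ := by
    intro htop
    exact hu0 (by have : u0 ∈ H := htop ▸ Subgroup.mem_top u0; exact this)
  constructor
  · exact ⟨H, hHne, fun u => Iff.rfl⟩
  -- counting
  set W := {a : ℕ | 1 ≤ a ∧ a ≤ n - 1 ∧ SSWitness a n} with hW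
  set S := {a : ℕ | 1 ≤ a ∧ a ≤ n - 1 ∧ ¬ SSWitness a n} with hS
  have hfin : (Set.Icc 1 (n - 1)).Finite := Set.finite_Icc _ _
  have hWsub : W ⊆ Set.Icc 1 (n - 1) := fun a ha => ⟨ha.1, ha.2.1⟩
  have hSsub : S ⊆ Set.Icc 1 (n - 1) := fun a ha => ⟨ha.1, ha.2.1⟩
  have hWfin : W.Finite := hfin.subset hWsub
  have hSfin : S.Finite := hfin.subset hSsub
  have hunion : W ∪ S = Set.Icc 1 (n - 1) := by
    ext a
    simp only [hW, hS, Set.mem_union, Set.mem_setOf_eq, Set.mem_Icc]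
    tauto
  have hdisj : Disjoint W S := by
    rw [Set.disjoint_left]
    intro a haW haS
    exact haS.2.2 haW.2.2
  have hIcc : (Set.Icc 1 (n - 1)).ncard = n - 1 := by
    rw [← Finset.coe_Icc, Set.ncard_coe_finset, Nat.card_Icc]
    omega
  have hsum : W.ncard + S.ncard = n - 1 := by
    rw [← Set.ncard_union_eq hdisj hWfin hSfin, hunion, hIcc]
  -- S injects into H
  have hSbound : S.ncard ≤ Nat.card H := by
    have hinj : Set.InjOn (fun a : ℕ => (a : ZMod n)) S := by
      intro a ha b hb hab
      have ha' : a < n := by have := ha.2.1; omega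
      have hb' : b < n := by have := hb.2.1; omega
      have := congrArg ZMod.val hab
      simpa [ZMod.val_cast_of_lt ha', ZMod.val_cast_of_lt hb'] using this
    have himg : (fun a : ℕ => (a : ZMod n)) '' S ⊆ Units.val '' (H : Set (ZMod n)ˣ) := by
      rintro x ⟨a, haS, rfl⟩
      have ha1 : 1 ≤ a := haS.1
      have ha2 : a < n := by have := haS.2.1; omega
      have hnw := haS.2.2
      rw [SSWitness] at hnw
      push_neg at hnw
      obtain ⟨hg, hcong⟩ := hnw
      have hg0 : Nat.gcd a n ≠ 0 := fun h0 => by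
        have := Nat.eq_zero_of_gcd_eq_zero_right h0; omega
      have hco : Nat.Coprime a n := by unfold Nat.Coprime; omega
      refine ⟨ZMod.unitOfCoprime a hco, ?_, ZMod.coe_unitOfCoprime a hco⟩
      show (ZMod.unitOfCoprime a hco : ZMod n) ^ e =
        ((jacobiSym (((ZMod.unitOfCoprime a hco : ZMod n)).val : ℤ) n : ℤ) : ZMod n)
      rw [ZMod.coe_unitOfCoprime, ZMod.val_cast_of_lt ha2]
      have : (((a : ℤ) ^ e : ℤ) : ZMod n) = ((jacobiSym (a : ℤ) n : ℤ) : ZMod n) :=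
        (ZMod.intCast_eq_intCast_iff _ _ _).mpr hcong
      push_cast at this
      exact this
    calc S.ncard = ((fun a : ℕ => (a : ZMod n)) '' S).ncard :=
          (Set.ncard_image_of_injOn hinj).symm
      _ ≤ (Units.val '' (H : Set (ZMod n)ˣ)).ncard := by
          exact Set.ncard_le_ncard himg (((H : Set (ZMod n)ˣ).toFinite).image _)
      _ = (H : Set (ZMod n)ˣ).ncard := Set.ncard_image_of_injective _ (fun _ _ h => Units.ext h)
      _ = Nat.card H := by rw [← Nat.card_coe_set_eq]; rfl
  have hHbound : 2 * Nat.card H ≤ n - 1 := by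
    have hcardeq := Subgroup.card_mul_index H
    have hidx1 : H.index ≠ 1 := fun h => hHne (Subgroup.index_eq_one.mp h)
    have hidx0 : H.index ≠ 0 := Subgroup.index_ne_zero_of_finite
    have hidx2 : 2 ≤ H.index := by omega
    have h2H : Nat.card H * 2 ≤ Nat.card H * H.index := Nat.mul_le_mul_left _ hidx2
    have hG : Nat.card (ZMod n)ˣ = n.totient := by
      rw [Nat.card_eq_fintype_card, ZMod.card_units_eq_totient]
    have htot : n.totient < n := Nat.totient_lt n h1
    omega
  omega
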